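/- Let m, n be integers with 0 ≤ m < n, q a prime power, and let 𝓕 be the family of all m-flats in F_q^n, each viewed as its set of q^m points. For 0 ≤ d < m, let I_{q^d}(𝓕) = {(S,T) ∈ 𝓕 × 𝓕 : |S ∩ T| = q^d} be the set of ordered pairs of m-flats intersecting in exactly q^d points (i.e., in a d-flat). Then |I_{q^d}(𝓕)| ≤ 64·q^{(n−d)(d+1)+2(n−m)(m−d)}; moreover, |I_k(𝓕)| = 0 for every k ≥ 1 that is not of the form q^d for some 0 ≤ d ≤ m. -/

import Mathlib

open Filter Asymptotics

def IsFlat (K : Type*) {V : Type*} [Field K] [AddCommGroup V] [Module K V]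
    (m : ℕ) (S : Set V) : Prop :=
  ∃ W : Submodule K V, Module.finrank K W = m ∧ ∃ v : V, S = (v + ·) '' (W : Set V)

/-! ### Auxiliary numeric lemmas -/

lemma aux_half_prod (r : ℕ) :
    (1:ℝ)/4 + (1/2)^(r+1) ≤ ∏ j ∈ Finset.range r, (1 - (1/2:ℝ)^(j+1)) := by
  induction r with
  | zero => norm_num
  | succ r ih =>
    rw [Finset.prod_range_succ]
    rcases Nat.eq_zero_or_pos r with hr | hr
    · subst hr; norm_num
    have h1 : ((1:ℝ)/2)^(r+1) ≤ 1/4 := by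
      calc ((1:ℝ)/2)^(r+1) ≤ (1/2)^2 := by
            apply pow_le_pow_of_le_one (by norm_num) (by norm_num) (by omega)
        _ = 1/4 := by norm_num
    have h2 : (0:ℝ) < (1/2:ℝ)^(r+1) := by positivity
    have h3 : ((1:ℝ)/2)^(r+1+1) = (1/2)^(r+1) * (1/2) := by ring
    set x : ℝ := (1/2:ℝ)^(r+1) with hx
    have h4 : (0:ℝ) ≤ 1 - x := by linarith
    nlinarith [mul_le_mul_of_nonneg_right ih h4]

lemma aux_prod_one_sub_ge (q : ℕ) (hq : 2 ≤ q) (r : ℕ) :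
    (1:ℝ)/4 ≤ ∏ j ∈ Finset.range r, (1 - ((q:ℝ)⁻¹)^(j+1)) := by
  have hq1 : (1:ℝ) ≤ q := by exact_mod_cast hq.trans' (by norm_num)
  have h : ∏ j ∈ Finset.range r, (1 - (1/2:ℝ)^(j+1)) ≤
      ∏ j ∈ Finset.range r, (1 - ((q:ℝ)⁻¹)^(j+1)) := by
    apply Finset.prod_le_prod
    · intro i _
      have : ((1:ℝ)/2)^(i+1) ≤ 1 := by
        apply pow_le_one₀ <;> norm_num
      linarith
    · intro i _
      have : ((q:ℝ)⁻¹)^(i+1) ≤ ((1:ℝ)/2)^(i+1) := by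
        apply pow_le_pow_left₀
        · positivity
        · rw [one_div]
          apply inv_anti₀ <;> [norm_num; exact_mod_cast hq]
      linarith
  have := aux_half_prod r
  have h2 : (0:ℝ) < (1/2:ℝ)^(r+1) := by positivity
  linarith

lemma aux_pow_sq_le_prod (q r : ℕ) (hq : 2 ≤ q) :
    q^(r*r) ≤ 4 * ∏ i ∈ Finset.range r, (q^r - q^i) := by
  have hq0 : (0:ℝ) < q := by positivity
  rw [← Nat.cast_le (α := ℝ)]
  have hcast : ((∏ i ∈ Finset.range r, (q^r - q^i) : ℕ) : ℝ) =
      ∏ i ∈ Finset.range r, (((q:ℝ)^(r-i) - 1) * (q:ℝ)^i) := by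
    rw [Nat.cast_prod]
    apply Finset.prod_congr rfl
    intro i hi
    rw [Finset.mem_range] at hi
    rw [Nat.cast_sub (Nat.pow_le_pow_right (by omega) (le_of_lt hi))]
    push_cast
    rw [sub_mul, one_mul, ← pow_add]
    congr 2
    omega
  rw [Nat.cast_mul, Nat.cast_pow, Nat.cast_ofNat, hcast, Finset.prod_mul_distrib,
    Finset.prod_pow_eq_pow_sum]
  have hrefl : ∏ i ∈ Finset.range r, ((q:ℝ)^(r-i) - 1) =
      ∏ j ∈ Finset.range r, ((q:ℝ)^(j+1) - 1) := by
    rw [← Finset.prod_range_reflect]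
    apply Finset.prod_congr rfl
    intro i hi
    rw [Finset.mem_range] at hi
    congr 2
    omega
  rw [hrefl]
  have hfac : ∀ j ∈ Finset.range r, ((q:ℝ)^(j+1) - 1) = (1 - ((q:ℝ)⁻¹)^(j+1)) * (q:ℝ)^(j+1) := by
    intro j _
    have : ((q:ℝ)⁻¹)^(j+1) * (q:ℝ)^(j+1) = 1 := by
      rw [← mul_pow, inv_mul_cancel₀ (ne_of_gt hq0), one_pow]
    nlinarith [this]
  rw [Finset.prod_congr rfl hfac, Finset.prod_mul_distrib, Finset.prod_pow_eq_pow_sum]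
  have hP := aux_prod_one_sub_ge q hq r
  have hsum : (∑ j ∈ Finset.range r, (j+1)) + (∑ i ∈ Finset.range r, i) = r*r := by
    clear hP hq hq0 hcast hrefl hfac
    induction r with
    | zero => simp
    | succ s ih =>
      rw [Finset.sum_range_succ, Finset.sum_range_succ, Nat.succ_mul, Nat.mul_succ]
      omega
  have hpow : (q:ℝ)^(∑ j ∈ Finset.range r, (j+1)) * (q:ℝ)^(∑ i ∈ Finset.range r, i)
      = (q:ℝ)^(r*r) := by
    rw [← pow_add, hsum]
  have h0 : (0:ℝ) < (q:ℝ)^(r*r) := by positivity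
  nlinarith [hpow, hP, h0]

/-! ### Counting subspaces -/

open Module in
lemma aux_card_subspaces_le {F : Type*} [Field F] [Fintype F] {V : Type*} [AddCommGroup V]
    [Module F V] [Finite V] (N r : ℕ) (hV : Module.finrank F V = N) (hr : r ≤ N) :
    Nat.card {W : Submodule F V // Module.finrank F ↥W = r}
      ≤ 4 * (Fintype.card F) ^ (r * (N - r)) := by
  classical
  set q := Fintype.card F with hqdef
  have hq2 : 2 ≤ q := Fintype.one_lt_card
  set c := ∏ i ∈ Finset.range r, (q^r - q^i) with hc
  have key : ∀ (W : Submodule F V), Module.finrank F ↥W = r →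
      ∀ b : Fin r → ↥W, LinearIndependent F b →
      Submodule.span F (Set.range (fun i => ((b i : V)))) = W := by
    intro W hW b hb
    have htop : Submodule.span F (Set.range b) = ⊤ :=
      hb.span_eq_top_of_card_eq_finrank' (by simp [hW])
    calc Submodule.span F (Set.range (fun i => ((b i : V))))
        = Submodule.span F (W.subtype '' Set.range b) := by rw [← Set.range_comp]; rfl
      _ = Submodule.map W.subtype (Submodule.span F (Set.range b)) :=
          (Submodule.map_span _ _).symm
      _ = Submodule.map W.subtype ⊤ := by rw [htop]
      _ = W := Submodule.map_subtype_top W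
  have hcW : ∀ W : {W : Submodule F V // Module.finrank F ↥W = r},
      Nat.card {b : Fin r → ↥W.1 // LinearIndependent F b} = c := by
    rintro ⟨W, hW⟩
    rw [card_linearIndependent (le_of_eq hW.symm)]
    rw [hc]
    rw [← Fin.prod_univ_eq_prod_range (fun i => q^r - q^i) r]
    simp [hW, hqdef]
  have hfib : ∀ W : {W : Submodule F V // Module.finrank F ↥W = r},
      Nonempty ({b : Fin r → ↥W.1 // LinearIndependent F b} ≃ Fin c) := by
    intro W
    have h := hcW W
    have f1 : Fintype {b : Fin r → ↥W.1 // LinearIndependent F b} := Fintype.ofFinite _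
    rw [Nat.card_eq_fintype_card] at h
    exact ⟨Fintype.equivFinOfCardEq h⟩
  have e := fun W => (hfib W).some
  set φ : {W : Submodule F V // Module.finrank F ↥W = r} × Fin c →
      {b : Fin r → V // LinearIndependent F b} :=
    fun x => ⟨fun i => (((e x.1).symm x.2).1 i : V),
      ((e x.1).symm x.2).2.map' x.1.1.subtype x.1.1.ker_subtype⟩ with hφ
  have hinj : Function.Injective φ := by
    rintro ⟨⟨W, hW⟩, j⟩ ⟨⟨W', hW'⟩, j'⟩ h
    simp only [hφ, Subtype.mk.injEq] at h
    replace h := congrArg Subtype.val h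
    dsimp only at h
    have hWW' : W = W' := by
      rw [← key W hW _ ((e ⟨W, hW⟩).symm j).2, ← key W' hW' _ ((e ⟨W', hW'⟩).symm j').2, h]
    subst hWW'
    have hj : (e ⟨W, hW⟩).symm j = (e ⟨W, hW⟩).symm j' := by
      apply Subtype.ext
      funext i
      exact Subtype.ext (congrFun h i)
    simpa using (e ⟨W, hW⟩).symm.injective hj
  have h1 : Nat.card ({W : Submodule F V // Module.finrank F ↥W = r} × Fin c)
      ≤ Nat.card {b : Fin r → V // LinearIndependent F b} :=
    Nat.card_le_card_of_injective φ hinj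
  rw [Nat.card_prod, Nat.card_eq_fintype_card (α := Fin c), Fintype.card_fin] at h1
  have h3 : Nat.card {b : Fin r → V // LinearIndependent F b} ≤ q^(N*r) := by
    have := Fintype.ofFinite V
    calc Nat.card {b : Fin r → V // LinearIndependent F b}
        ≤ Nat.card (Fin r → V) := Nat.card_le_card_of_injective _ Subtype.val_injective
      _ = (Nat.card V) ^ r := by rw [Nat.card_fun]; simp
      _ = (q^N)^r := by rw [Nat.card_eq_fintype_card, card_eq_pow_finrank (K := F), hV]
      _ = q^(N*r) := by rw [← pow_mul]
  have h4 := aux_pow_sq_le_prod q r hq2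
  set A := Nat.card {W : Submodule F V // Module.finrank F ↥W = r}
  have h5 : A * q^(r*r) ≤ (4 * q^(r*(N-r))) * q^(r*r) := by
    calc A * q^(r*r) ≤ A * (4 * c) := Nat.mul_le_mul_left A h4
      _ = 4 * (A * c) := by ring
      _ ≤ 4 * q^(N*r) := Nat.mul_le_mul_left 4 (le_trans h1 h3)
      _ = (4 * q^(r*(N-r))) * q^(r*r) := by
          rw [mul_assoc, ← pow_add, ← Nat.mul_add, Nat.sub_add_cancel hr, mul_comm r N]
  exact Nat.le_of_mul_le_mul_right h5 (by positivity)

/-! ### Coset lemmas -/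

section Cosets

variable {F : Type*} [Field F] {V : Type*} [AddCommGroup V] [Module F V]

lemma aux_mem_coset {W : Submodule F V} {v x : V} :
    x ∈ (v + ·) '' (W : Set V) ↔ x - v ∈ W := by
  constructor
  · rintro ⟨w, hw, rfl⟩; simpa using hw
  · intro h
    refine ⟨x - v, h, ?_⟩
    show v + (x - v) = x
    abel

lemma aux_coset_eq {W : Submodule F V} {v p : V} (hp : p ∈ (v + ·) '' (W : Set V)) :
    (v + ·) '' (W : Set V) = (p + ·) '' (W : Set V) := by
  rw [aux_mem_coset] at hp
  ext x
  rw [aux_mem_coset, aux_mem_coset]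
  constructor <;> intro h
  · have h2 : x - p = (x - v) - (p - v) := by abel
    rw [h2]
    exact W.sub_mem h hp
  · have h2 : x - v = (x - p) + (p - v) := by abel
    rw [h2]
    exact W.add_mem h hp

lemma aux_inter_coset {W1 W2 : Submodule F V} {v1 v2 p : V}
    (hp : p ∈ ((v1 + ·) '' (W1 : Set V)) ∩ ((v2 + ·) '' (W2 : Set V))) :
    ((v1 + ·) '' (W1 : Set V)) ∩ ((v2 + ·) '' (W2 : Set V))
      = (p + ·) '' ((W1 ⊓ W2 : Submodule F V) : Set V) := by
  rw [aux_coset_eq hp.1, aux_coset_eq hp.2]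
  ext x
  simp only [Set.mem_inter_iff, aux_mem_coset]
  exact (Submodule.mem_inf).symm

lemma aux_ncard_coset [Fintype F] [Finite V] (W : Submodule F V) (p : V) :
    ((p + ·) '' (W : Set V)).ncard = (Fintype.card F) ^ (Module.finrank F ↥W) := by
  rw [Set.ncard_image_of_injective _ (add_right_injective p)]
  rw [← Nat.card_coe_set_eq]
  haveI := Fintype.ofFinite ↥W
  rw [show Nat.card ↥(W : Set V) = Nat.card ↥W from rfl, Nat.card_eq_fintype_card,
    Module.card_eq_pow_finrank (K := F)]

lemma aux_mkQ_preimage (W : Submodule F V) (p : V) :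
    W.mkQ ⁻¹' {W.mkQ p} = (p + ·) '' (W : Set V) := by
  ext x
  simp only [Set.mem_preimage, Set.mem_singleton_iff, aux_mem_coset, Submodule.mkQ_apply,
    Submodule.Quotient.eq]

end Cosets

/-! ### Counting subspaces above a fixed subspace -/

open Module in
lemma aux_card_over_le {F : Type*} [Field F] [Fintype F] {V : Type*} [AddCommGroup V]
    [Module F V] [Finite V] (N dd r : ℕ) (hV : Module.finrank F V = N) (U : Submodule F V)
    (hU : Module.finrank F ↥U = dd) (hr : dd ≤ r) (hrN : r ≤ N) :
    Nat.card {W : Submodule F V // U ≤ W ∧ Module.finrank F ↥W = r}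
      ≤ 4 * (Fintype.card F) ^ ((r - dd) * (N - r)) := by
  classical
  haveI : Finite (V ⧸ U) := Quotient.finite _
  haveI : Finite (Submodule F (V ⧸ U)) := Finite.of_injective _ SetLike.coe_injective
  have hQ : Module.finrank F (V ⧸ U) = N - dd := by
    have := Submodule.finrank_quotient_add_finrank U
    omega
  have hfr : ∀ W : Submodule F V, U ≤ W → Module.finrank F ↥W = r →
      Module.finrank F ↥(Submodule.map U.mkQ W) = r - dd := by
    intro W hle hfrW
    have h1 := LinearMap.finrank_range_add_finrank_ker (U.mkQ.comp W.subtype)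
    rw [LinearMap.range_comp, Submodule.range_subtype] at h1
    have h2 : LinearMap.ker (U.mkQ.comp W.subtype) = Submodule.comap W.subtype U := by
      rw [LinearMap.ker_comp, Submodule.ker_mkQ]
    rw [h2] at h1
    have h3 : Module.finrank F ↥(Submodule.comap W.subtype U) = dd := by
      rw [← hU]
      exact LinearEquiv.finrank_eq (Submodule.comapSubtypeEquivOfLe hle)
    omega
  have hinj : Function.Injective
      (fun W : {W : Submodule F V // U ≤ W ∧ Module.finrank F ↥W = r} =>
      (⟨Submodule.map U.mkQ W.1, hfr W.1 W.2.1 W.2.2⟩ :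
        {W' : Submodule F (V ⧸ U) // Module.finrank F ↥W' = r - dd})) := by
    intro W W' h
    apply Subtype.ext
    have h0 := congrArg Subtype.val h
    have h1 := congrArg (Submodule.comap U.mkQ) h0
    simp only at h1
    rwa [Submodule.comap_map_mkQ, Submodule.comap_map_mkQ, sup_of_le_right W.2.1,
      sup_of_le_right W'.2.1] at h1
  calc Nat.card {W : Submodule F V // U ≤ W ∧ Module.finrank F ↥W = r}
      ≤ Nat.card {W' : Submodule F (V ⧸ U) // Module.finrank F ↥W' = r - dd} :=
        Nat.card_le_card_of_injective _ hinj
    _ ≤ 4 * (Fintype.card F) ^ ((r - dd) * ((N - dd) - (r - dd))) :=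
        aux_card_subspaces_le (N - dd) (r - dd) hQ (by omega)
    _ = 4 * (Fintype.card F) ^ ((r - dd) * (N - r)) := by
        have h9 : (N - dd) - (r - dd) = N - r := by omega
        rw [h9]

lemma aux_nat_card_sigma_le {ι : Type*} [Finite ι] {β : ι → Type*} [∀ i, Finite (β i)] (c : ℕ)
    (h : ∀ i, Nat.card (β i) ≤ c) : Nat.card (Σ i, β i) ≤ Nat.card ι * c := by
  cases nonempty_fintype ι
  haveI : ∀ i, Fintype (β i) := fun i => Fintype.ofFinite _
  rw [Nat.card_eq_fintype_card, Fintype.card_sigma, Nat.card_eq_fintype_card]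
  calc ∑ i, Fintype.card (β i) ≤ ∑ _i : ι, c :=
        Finset.sum_le_sum (fun i _ => by rw [← Nat.card_eq_fintype_card]; exact h i)
    _ = Fintype.card ι * c := by rw [Finset.sum_const, Finset.card_univ, smul_eq_mul]

/-! ### Main theorem -/

theorem stmt18 (n m q : ℕ) (hmn : m < n) (hqpp : IsPrimePow q)
    (F : Type*) [Field F] [Fintype F] (hq : Fintype.card F = q) :
    (∀ d, d < m →
      Nat.card {p : Set (Fin n → F) × Set (Fin n → F) //
          IsFlat F m p.1 ∧ IsFlat F m p.2 ∧ (p.1 ∩ p.2).ncard = q ^ d}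
        ≤ 64 * q ^ ((n - d) * (d + 1) + 2 * (n - m) * (m - d))) ∧
    (∀ k, 1 ≤ k → (¬ ∃ d ≤ m, k = q ^ d) →
      Nat.card {p : Set (Fin n → F) × Set (Fin n → F) //
          IsFlat F m p.1 ∧ IsFlat F m p.2 ∧ (p.1 ∩ p.2).ncard = k} = 0) := by
  classical
  subst hq
  set q := Fintype.card F with hqdef
  have hq2 : 2 ≤ q := Fintype.one_lt_card
  have hVfr : Module.finrank F (Fin n → F) = n := Module.finrank_fin_fun F
  haveI : Finite (Submodule F (Fin n → F)) := Finite.of_injective _ SetLike.coe_injective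
  constructor
  · -- Part 1
    intro d hd
    -- the target type
    set T := Σ U : {U : Submodule F (Fin n → F) // Module.finrank F ↥U = d},
        ((Fin n → F) ⧸ U.1) ×
        ({W : Submodule F (Fin n → F) // U.1 ≤ W ∧ Module.finrank F ↥W = m} ×
         {W : Submodule F (Fin n → F) // U.1 ≤ W ∧ Module.finrank F ↥W = m}) with hT
    set g : T → Set (Fin n → F) × Set (Fin n → F) := fun z =>
      (z.2.2.1.1.mkQ ⁻¹' {Submodule.mapQ z.1.1 z.2.2.1.1 LinearMap.id
          (by simpa using z.2.2.1.2.1) z.2.1},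
       z.2.2.2.1.mkQ ⁻¹' {Submodule.mapQ z.1.1 z.2.2.2.1 LinearMap.id
          (by simpa using z.2.2.2.2.1) z.2.1}) with hg
    have hsurj : ∀ x : {p : Set (Fin n → F) × Set (Fin n → F) //
        IsFlat F m p.1 ∧ IsFlat F m p.2 ∧ (p.1 ∩ p.2).ncard = q ^ d},
        x.1 ∈ Set.range g := by
      rintro ⟨⟨S, Tt⟩, ⟨W1, hW1, v1, hv1⟩, ⟨W2, hW2, v2, hv2⟩, hk⟩
      simp only at hv1 hv2 hk
      subst hv1; subst hv2
      obtain ⟨p, hp⟩ : (((v1 + ·) '' (W1 : Set (Fin n → F))) ∩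
          ((v2 + ·) '' (W2 : Set (Fin n → F)))).Nonempty := by
        apply Set.nonempty_of_ncard_ne_zero
        rw [hk]
        positivity
      have hint := aux_inter_coset hp
      have hU : Module.finrank F ↥(W1 ⊓ W2) = d := by
        rw [hint, aux_ncard_coset] at hk
        exact Nat.pow_right_injective hq2 hk
      refine ⟨⟨⟨W1 ⊓ W2, hU⟩, ((W1 ⊓ W2).mkQ p,
        ⟨W1, inf_le_left, hW1⟩, ⟨W2, inf_le_right, hW2⟩)⟩, ?_⟩
      have hmapq : ∀ (W : Submodule F (Fin n → F)) (hle : W1 ⊓ W2 ≤ W)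
          (h' : W1 ⊓ W2 ≤ Submodule.comap LinearMap.id W),
          Submodule.mapQ (W1 ⊓ W2) W LinearMap.id h' ((W1 ⊓ W2).mkQ p) = W.mkQ p := by
        intro W hle h'
        rw [Submodule.mkQ_apply, Submodule.mapQ_apply, Submodule.mkQ_apply]
        rfl
      rw [hg]
      refine Prod.ext ?_ ?_
      · show _ = (v1 + ·) '' (W1 : Set (Fin n → F))
        simp only
        rw [hmapq W1 inf_le_left, aux_mkQ_preimage, ← aux_coset_eq hp.1]
      · show _ = (v2 + ·) '' (W2 : Set (Fin n → F))
        simp only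
        rw [hmapq W2 inf_le_right, aux_mkQ_preimage, ← aux_coset_eq hp.2]
    -- counting
    have hstep1 : Nat.card {p : Set (Fin n → F) × Set (Fin n → F) //
        IsFlat F m p.1 ∧ IsFlat F m p.2 ∧ (p.1 ∩ p.2).ncard = q ^ d}
        ≤ Nat.card T := by
      calc Nat.card {p : Set (Fin n → F) × Set (Fin n → F) //
            IsFlat F m p.1 ∧ IsFlat F m p.2 ∧ (p.1 ∩ p.2).ncard = q ^ d}
          ≤ Nat.card (Set.range g) := by
            apply Nat.card_le_card_of_injective
              (fun x => (⟨x.1, hsurj x⟩ : Set.range g))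
            intro x y h
            simp only [Subtype.mk.injEq] at h
            exact Subtype.ext h
        _ ≤ Nat.card T := Finite.card_range_le g
    have hfib : ∀ U : {U : Submodule F (Fin n → F) // Module.finrank F ↥U = d},
        Nat.card (((Fin n → F) ⧸ U.1) ×
          ({W : Submodule F (Fin n → F) // U.1 ≤ W ∧ Module.finrank F ↥W = m} ×
           {W : Submodule F (Fin n → F) // U.1 ≤ W ∧ Module.finrank F ↥W = m}))
        ≤ q^(n-d) * ((4 * q^((m-d)*(n-m))) * (4 * q^((m-d)*(n-m)))) := by
      intro U
      rw [Nat.card_prod, Nat.card_prod]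
      have hquot : Nat.card ((Fin n → F) ⧸ U.1) = q^(n-d) := by
        haveI : Finite ((Fin n → F) ⧸ U.1) := Quotient.finite _
        haveI := Fintype.ofFinite ((Fin n → F) ⧸ U.1)
        rw [Nat.card_eq_fintype_card, Module.card_eq_pow_finrank (K := F)]
        congr 1
        have := Submodule.finrank_quotient_add_finrank U.1
        rw [hVfr, U.2] at this
        omega
      have hWcard : Nat.card {W : Submodule F (Fin n → F) //
          U.1 ≤ W ∧ Module.finrank F ↥W = m} ≤ 4 * q^((m-d)*(n-m)) :=
        aux_card_over_le n d m hVfr U.1 U.2 (by omega) (by omega)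
      rw [hquot]
      exact Nat.mul_le_mul_left _ (Nat.mul_le_mul hWcard hWcard)
    have hstep2 : Nat.card T ≤
        Nat.card {U : Submodule F (Fin n → F) // Module.finrank F ↥U = d} *
        (q^(n-d) * ((4 * q^((m-d)*(n-m))) * (4 * q^((m-d)*(n-m))))) :=
      aux_nat_card_sigma_le _ hfib
    have hstep3 : Nat.card {U : Submodule F (Fin n → F) // Module.finrank F ↥U = d}
        ≤ 4 * q^(d*(n-d)) :=
      aux_card_subspaces_le n d hVfr (by omega)
    calc Nat.card {p : Set (Fin n → F) × Set (Fin n → F) //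
          IsFlat F m p.1 ∧ IsFlat F m p.2 ∧ (p.1 ∩ p.2).ncard = q ^ d}
        ≤ Nat.card T := hstep1
      _ ≤ Nat.card {U : Submodule F (Fin n → F) // Module.finrank F ↥U = d} *
          (q^(n-d) * ((4 * q^((m-d)*(n-m))) * (4 * q^((m-d)*(n-m))))) := hstep2
      _ ≤ (4 * q^(d*(n-d))) *
          (q^(n-d) * ((4 * q^((m-d)*(n-m))) * (4 * q^((m-d)*(n-m))))) :=
          Nat.mul_le_mul_right _ hstep3
      _ = 64 * q ^ ((n - d) * (d + 1) + 2 * (n - m) * (m - d)) := by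
          rw [show (n - d) * (d + 1) + 2 * (n - m) * (m - d)
            = d*(n-d) + ((n-d) + ((m-d)*(n-m) + (m-d)*(n-m))) from by ring]
          rw [pow_add, pow_add, pow_add]
          ring
  · -- Part 2
    intro k hk1 hnot
    haveI : IsEmpty {p : Set (Fin n → F) × Set (Fin n → F) //
        IsFlat F m p.1 ∧ IsFlat F m p.2 ∧ (p.1 ∩ p.2).ncard = k} := by
      constructor
      rintro ⟨⟨S, Tt⟩, ⟨W1, hW1, v1, hv1⟩, ⟨W2, hW2, v2, hv2⟩, hk⟩
      simp only at hv1 hv2 hk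
      subst hv1; subst hv2
      obtain ⟨p, hp⟩ : (((v1 + ·) '' (W1 : Set (Fin n → F))) ∩
          ((v2 + ·) '' (W2 : Set (Fin n → F)))).Nonempty := by
        apply Set.nonempty_of_ncard_ne_zero
        omega
      rw [aux_inter_coset hp, aux_ncard_coset] at hk
      refine hnot ⟨Module.finrank F ↥(W1 ⊓ W2), ?_, hk.symm⟩
      rw [← hW1]
      exact Submodule.finrank_mono inf_le_left
    exact Nat.card_of_isEmpty
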